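/- Every tree admits a 3-track layout with respect to which the set of all edges of the tree can be partitioned into two nicely ordered families (i.e., a 2-clique-colorable 3-track layout). -/

import Mathlib

/-- A track layout of `G` with tracks indexed by `T`: an injective position map,
adjacent vertices on distinct tracks, and no X-crossing. -/
def IsTrackLayout {V : Type*} {T : Type*} (G : SimpleGraph V)
    (track : V → T) (pos : V → ℕ) : Prop :=
  Function.Injective pos ∧
  (∀ ⦃u v⦄, G.Adj u v → track u ≠ track v) ∧
  (∀ ⦃u v x y⦄, G.Adj u v → G.Adj x y → track u = track x → track v = track y →
    pos u < pos x → pos y < pos v → False)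

/-- The track number of `G`: the least `t` such that `G` has a `t`-track layout. -/
noncomputable def trackNumber {V : Type*} (G : SimpleGraph V) : ℕ :=
  sInf {t | ∃ (track : V → Fin t) (pos : V → ℕ), IsTrackLayout G track pos}

/-- `C₁ ≺ C₂` : on every common track, all vertices of `C₁` precede those of `C₂`. -/
def CliquePrec {V : Type*} {T : Type*} (track : V → T) (pos : V → ℕ)
    (C₁ C₂ : Set V) : Prop :=
  ∀ u ∈ C₁, ∀ w ∈ C₂, track u = track w → pos u ≤ pos w

/-- A family of cliques is nicely ordered if it can be enumerated as `C₁, …, C_m`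
with `C_i ≺ C_j` whenever `i < j`. -/
def NicelyOrdered {V : Type*} {T : Type*} (track : V → T) (pos : V → ℕ)
    (S : Set (Set V)) : Prop :=
  ∃ l : List (Set V), l.Nodup ∧ (∀ C, C ∈ l ↔ C ∈ S) ∧
    l.Pairwise (CliquePrec track pos)

/-- A family of cliques is `c`-colorable with respect to a track layout if it can be
partitioned into `c` nicely ordered subfamilies. -/
def CliqueColorable {V : Type*} {T : Type*} (track : V → T) (pos : V → ℕ)
    (c : ℕ) (S : Set (Set V)) : Prop :=
  ∃ P : Fin c → Set (Set V),
    (∀ C ∈ S, ∃ i, C ∈ P i) ∧ (∀ i, P i ⊆ S) ∧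
    (∀ i j, i ≠ j → Disjoint (P i) (P j)) ∧
    (∀ i, NicelyOrdered track pos (P i))



namespace TreeTrackAux

open SimpleGraph

variable {V : Type*} {G : SimpleGraph V}

lemma tree_path_length (hG : G.IsTree) {a b : V} {p : G.Walk a b} (hp : p.IsPath) :
    p.length = G.dist a b := by
  obtain ⟨q, hq, hql⟩ := hG.isConnected.exists_path_of_dist a b
  rw [(hG.existsUnique_path a b).unique hp hq, hql]

lemma parent_exists (hG : G.IsTree) (r v : V) (h : G.dist r v ≠ 0) :
    ∃ u, G.Adj u v ∧ G.dist r u + 1 = G.dist r v := by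
  obtain ⟨p, hp, hpl⟩ := hG.isConnected.exists_path_of_dist v r
  cases p with
  | nil => simp [SimpleGraph.dist_self] at h
  | cons hadj q =>
      rename_i u
      refine ⟨u, hadj.symm, ?_⟩
      have h1 : G.dist r u ≤ q.length := by
        rw [SimpleGraph.dist_comm]; exact SimpleGraph.dist_le q
      have h2 : G.dist r v ≤ G.dist r u + 1 := by
        have := hG.isConnected.dist_triangle (u := r) (v := u) (w := v)
        have h3 : G.dist u v = 1 := SimpleGraph.dist_eq_one_iff_adj.mpr hadj.symm
        omega
      have h4 : (SimpleGraph.Walk.cons hadj q).length = q.length + 1 := by simp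
      rw [SimpleGraph.dist_comm] at hpl
      omega

noncomputable def treePar (hG : G.IsTree) (r v : V) : V :=
  if h : G.dist r v = 0 then v else (parent_exists hG r v h).choose

lemma treePar_spec (hG : G.IsTree) (r : V) {v : V} (h : G.dist r v ≠ 0) :
    G.Adj (treePar hG r v) v ∧ G.dist r (treePar hG r v) + 1 = G.dist r v := by
  rw [treePar, dif_neg h]
  exact (parent_exists hG r v h).choose_spec

lemma adj_dist (hG : G.IsTree) (r : V) {u v : V} (h : G.Adj u v) :
    G.dist r v = G.dist r u + 1 ∨ G.dist r u = G.dist r v + 1 := by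
  classical
  obtain ⟨p, hp, hpl⟩ := hG.isConnected.exists_path_of_dist r u
  by_cases hv : v ∈ p.support
  · right
    have hsingle : (SimpleGraph.Walk.cons h.symm SimpleGraph.Walk.nil : G.Walk v u).IsPath := by
      rw [SimpleGraph.Walk.cons_isPath_iff]
      exact ⟨SimpleGraph.Walk.IsPath.nil, by simp [h.ne']⟩
    have hdrop : p.dropUntil v hv = SimpleGraph.Walk.cons h.symm SimpleGraph.Walk.nil :=
      (hG.existsUnique_path v u).unique (hp.dropUntil hv) hsingle
    have htake := tree_path_length hG (hp.takeUntil hv)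
    have hlen := congrArg SimpleGraph.Walk.length (p.take_spec hv)
    rw [SimpleGraph.Walk.length_append, hdrop] at hlen
    simp at hlen
    omega
  · left
    have hcp : (p.concat h).IsPath := by
      rw [← SimpleGraph.Walk.isPath_reverse_iff, SimpleGraph.Walk.reverse_concat,
        SimpleGraph.Walk.cons_isPath_iff]
      exact ⟨hp.reverse, by simpa [SimpleGraph.Walk.support_reverse] using hv⟩
    have := tree_path_length hG hcp
    rw [SimpleGraph.Walk.length_concat, hpl] at this
    omega

lemma parent_eq (hG : G.IsTree) (r : V) {u v : V} (h : G.Adj u v)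
    (hd : G.dist r u + 1 = G.dist r v) : u = treePar hG r v := by
  classical
  have h0 : G.dist r v ≠ 0 := by omega
  obtain ⟨hadj, hdist⟩ := treePar_spec hG r h0
  obtain ⟨p, hp, hpl⟩ := hG.isConnected.exists_path_of_dist r u
  obtain ⟨q, hq, hql⟩ := hG.isConnected.exists_path_of_dist r (treePar hG r v)
  have hvp : v ∉ p.support := by
    intro hm
    have h1 := SimpleGraph.dist_le (p.takeUntil v hm)
    have h2 := SimpleGraph.Walk.length_takeUntil_le p hm
    omega
  have hvq : v ∉ q.support := by
    intro hm
    have h1 := SimpleGraph.dist_le (q.takeUntil v hm)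
    have h2 := SimpleGraph.Walk.length_takeUntil_le q hm
    omega
  have hP : (p.concat h).IsPath := by
    rw [← SimpleGraph.Walk.isPath_reverse_iff, SimpleGraph.Walk.reverse_concat,
      SimpleGraph.Walk.cons_isPath_iff]
    exact ⟨hp.reverse, by simpa [SimpleGraph.Walk.support_reverse] using hvp⟩
  have hQ : (q.concat hadj).IsPath := by
    rw [← SimpleGraph.Walk.isPath_reverse_iff, SimpleGraph.Walk.reverse_concat,
      SimpleGraph.Walk.cons_isPath_iff]
    exact ⟨hq.reverse, by simpa [SimpleGraph.Walk.support_reverse] using hvq⟩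
  have hPQ := (hG.existsUnique_path r v).unique hP hQ
  have h2 : (p.concat h).reverse.support = (q.concat hadj).reverse.support := by rw [hPQ]
  rw [SimpleGraph.Walk.reverse_concat, SimpleGraph.Walk.reverse_concat,
    SimpleGraph.Walk.support_cons, SimpleGraph.Walk.support_cons] at h2
  simp only [List.cons.injEq, true_and] at h2
  have h5 := congrArg List.head? h2
  rw [p.reverse.support_eq_cons, (q.reverse).support_eq_cons] at h5
  simpa using h5

noncomputable def treeKey (hG : G.IsTree) (r : V) (f : V → ℕ) (N : ℕ) (v : V) : ℕ :=
  if h : G.dist r v = 0 then 0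
  else treeKey hG r f N (treePar hG r v) * N + (f v + 1)
termination_by G.dist r v
decreasing_by
  have := (treePar_spec hG r h).2; omega

lemma treeKey_root (hG : G.IsTree) (r : V) (f : V → ℕ) (N : ℕ) {v : V}
    (h : G.dist r v = 0) : treeKey hG r f N v = 0 := by
  rw [treeKey, dif_pos h]

lemma treeKey_ne (hG : G.IsTree) (r : V) (f : V → ℕ) (N : ℕ) {v : V}
    (h : G.dist r v ≠ 0) :
    treeKey hG r f N v = treeKey hG r f N (treePar hG r v) * N + (f v + 1) := by
  rw [treeKey, dif_neg h]

end TreeTrackAux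

open TreeTrackAux in
/-- Every tree admits a `3`-track layout with respect to which the set of all edges
of the tree (its maximal cliques) can be partitioned into two nicely ordered families. -/
theorem tree_twoCliqueColorable_three_tracks {V : Type*} [Fintype V]
    (G : SimpleGraph V) (hG : G.IsTree) :
    ∃ (track : V → Fin 3) (pos : V → ℕ),
      IsTrackLayout G track pos ∧
      CliqueColorable track pos 2 {C : Set V | ∃ u v, G.Adj u v ∧ C = {u, v}} := by
  classical
  obtain ⟨r⟩ := hG.isConnected.nonempty
  set N : ℕ := Fintype.card V + 1 with hNdef
  set f : V → ℕ := fun v => (Fintype.equivFin V v : ℕ) with hfdef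
  have hflt : ∀ v, f v + 1 < N := by
    intro v
    have := (Fintype.equivFin V v).isLt
    simp only [hfdef, hNdef]
    omega
  have hfinj : Function.Injective f := by
    intro a b hab
    exact (Fintype.equivFin V).injective (Fin.ext (by simpa [hfdef] using hab))
  set key : V → ℕ := treeKey hG r f N with hkeydef
  have hd0 : ∀ v : V, G.dist r v = 0 ↔ v = r := fun v =>
    (hG.isConnected.dist_eq_zero_iff).trans eq_comm
  have hpar : ∀ v : V, v ≠ r →
      G.Adj (treePar hG r v) v ∧ G.dist r (treePar hG r v) + 1 = G.dist r v :=
    fun v hv => treePar_spec hG r (fun h => hv ((hd0 v).mp h))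
  have hkey0 : key r = 0 := treeKey_root hG r f N ((hd0 r).mpr rfl)
  have hkeyS : ∀ v : V, v ≠ r → key v = key (treePar hG r v) * N + (f v + 1) :=
    fun v hv => treeKey_ne hG r f N (fun h => hv ((hd0 v).mp h))
  have hkeypos : ∀ v, v ≠ r → 0 < key v := fun v hv => by rw [hkeyS v hv]; omega
  have hkeyinj : ∀ u v : V, key u = key v → u = v := by
    intro u v huv
    by_cases hu : u = r <;> by_cases hv : v = r
    · rw [hu, hv]
    · exfalso; rw [hu, hkey0] at huv; have := hkeypos v hv; omega
    · exfalso; rw [hv, hkey0] at huv; have := hkeypos u hu; omega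
    · rw [hkeyS u hu, hkeyS v hv] at huv
      have h1 := hflt u
      have h2 := hflt v
      have h3 : f u + 1 = f v + 1 := by
        have h4 := congrArg (· % N) huv
        rw [Nat.mul_comm (key (treePar hG r u)) N, Nat.mul_comm (key (treePar hG r v)) N,
          Nat.mul_add_mod, Nat.mul_add_mod, Nat.mod_eq_of_lt h1, Nat.mod_eq_of_lt h2] at h4
        exact h4
      exact hfinj (by omega)
  set pos : V → ℕ := fun v =>
    {u : V | G.dist r u < G.dist r v ∨ (G.dist r u = G.dist r v ∧ key u < key v)}.ncard
    with hposdef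
  have hposmono : ∀ u v : V,
      (G.dist r u < G.dist r v ∨ (G.dist r u = G.dist r v ∧ key u < key v)) →
      pos u < pos v := by
    intro u v h
    rw [hposdef]
    refine Set.ncard_lt_ncard ⟨fun x hx => ?_, fun hsub => ?_⟩ (Set.toFinite _)
    · simp only [Set.mem_setOf_eq] at hx ⊢; omega
    · have hmem : u ∈ {x : V | G.dist r x < G.dist r v ∨
          (G.dist r x = G.dist r v ∧ key x < key v)} := h
      have := hsub hmem
      simp only [Set.mem_setOf_eq] at this
      omega
  have hcmp : ∀ u v : V, u ≠ v →
      (G.dist r u < G.dist r v ∨ (G.dist r u = G.dist r v ∧ key u < key v)) ∨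
      (G.dist r v < G.dist r u ∨ (G.dist r v = G.dist r u ∧ key v < key u)) := by
    intro u v huv
    have : key u ≠ key v := fun h => huv (hkeyinj u v h)
    omega
  have hposinj : Function.Injective pos := by
    intro u v h
    by_contra hne
    rcases hcmp u v hne with h1 | h1
    · have := hposmono u v h1; omega
    · have := hposmono v u h1; omega
  have hposlt : ∀ u v : V, pos u < pos v →
      (G.dist r u < G.dist r v ∨ (G.dist r u = G.dist r v ∧ key u < key v)) := by
    intro u v h
    have hne : u ≠ v := fun e => by rw [e] at h; omega
    rcases hcmp u v hne with h1 | h1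
    · exact h1
    · have := hposmono v u h1; omega
  have hkeypar : ∀ u v : V, u ≠ r → v ≠ r → G.dist r u = G.dist r v → key u < key v →
      pos (treePar hG r u) ≤ pos (treePar hG r v) := by
    intro u v hu hv hdv hk
    have h1 := hkeyS u hu
    have h2 := hkeyS v hv
    have hle : key (treePar hG r u) ≤ key (treePar hG r v) := by
      by_contra hgt
      push_neg at hgt
      have h5 : (key (treePar hG r v) + 1) * N ≤ key (treePar hG r u) * N :=
        Nat.mul_le_mul_right N (by omega)
      rw [add_mul, one_mul] at h5
      have := hflt u
      have := hflt v
      omega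
    rcases lt_or_eq_of_le hle with hlt | heq
    · have hdp : G.dist r (treePar hG r u) = G.dist r (treePar hG r v) := by
        have := (hpar u hu).2
        have := (hpar v hv).2
        omega
      exact le_of_lt (hposmono _ _ (Or.inr ⟨hdp, hlt⟩))
    · rw [hkeyinj _ _ heq]
  have hadjd : ∀ u v : V, G.Adj u v →
      G.dist r v = G.dist r u + 1 ∨ G.dist r u = G.dist r v + 1 :=
    fun u v h => adj_dist hG r h
  have hner : ∀ v : V, G.dist r v ≠ 0 → v ≠ r := by
    intro v h e
    exact h ((hd0 v).mpr e)
  refine ⟨fun v => (⟨G.dist r v % 3, by omega⟩ : Fin 3), pos, ⟨hposinj, ?_, ?_⟩, ?_⟩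
  · -- adjacent vertices on distinct tracks
    intro u v h heq
    have h3 : G.dist r u % 3 = G.dist r v % 3 := congrArg Fin.val heq
    rcases hadjd u v h with h1 | h1 <;> omega
  · -- no X-crossing
    intro u v x y h1 h2 ht1 ht2 hp1 hp2
    have ht1' : G.dist r u % 3 = G.dist r x % 3 := congrArg Fin.val ht1
    have ht2' : G.dist r v % 3 = G.dist r y % 3 := congrArg Fin.val ht2
    have e1 := hadjd u v h1
    have e2 := hadjd x y h2
    have hux : G.dist r u ≤ G.dist r x := by
      by_contra hc
      push_neg at hc
      have := hposmono x u (Or.inl hc); omega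
    have hyv : G.dist r y ≤ G.dist r v := by
      by_contra hc
      push_neg at hc
      have := hposmono v y (Or.inl hc); omega
    have hdd : G.dist r u = G.dist r x ∧ G.dist r v = G.dist r y := by omega
    rcases e1 with e1 | e1
    · -- v, y are the children
      have hvr : v ≠ r := hner v (by omega)
      have hyr : y ≠ r := hner y (by omega)
      have hu' : u = treePar hG r v := parent_eq hG r h1 (by omega)
      have hx' : x = treePar hG r y := parent_eq hG r h2 (by omega)
      have hkyv : key y < key v := by
        rcases hposlt y v hp2 with h | h
        · omega
        · exact h.2
      have := hkeypar y v hyr hvr (by omega) hkyv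
      rw [← hx', ← hu'] at this
      omega
    · -- u, x are the children
      have hur : u ≠ r := hner u (by omega)
      have hxr : x ≠ r := hner x (by omega)
      have hv' : v = treePar hG r u := parent_eq hG r h1.symm (by omega)
      have hy' : y = treePar hG r x := parent_eq hG r h2.symm (by omega)
      have hkux : key u < key x := by
        rcases hposlt u x hp1 with h | h
        · omega
        · exact h.2
      have := hkeypar u x hur hxr (by omega) hkux
      rw [← hv', ← hy'] at this
      omega
  · -- clique colorability
    have hrep : ∀ v w : V, v ≠ r → w ≠ r →
        ({treePar hG r v, v} : Set V) = {treePar hG r w, w} → v = w := by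
      intro v w hv hw h
      rcases Set.pair_eq_pair_iff.mp h with ⟨h1, h2⟩ | ⟨h1, h2⟩
      · exact h2
      · exfalso
        have a1 := (hpar v hv).2
        have a2 := (hpar w hw).2
        rw [h1] at a1
        rw [← h2] at a2
        omega
    refine ⟨fun i => {C | ∃ v : V, v ≠ r ∧ C = {treePar hG r v, v} ∧
        G.dist r (treePar hG r v) % 2 = i.val}, ?_, ?_, ?_, ?_⟩
    · -- cover
      rintro C ⟨u, v, hadj, rfl⟩
      rcases hadjd u v hadj with h | h
      · have hvr : v ≠ r := hner v (by omega)
        have hu' : u = treePar hG r v := parent_eq hG r hadj (by omega)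
        refine ⟨⟨G.dist r u % 2, by omega⟩, v, hvr, by rw [← hu'], ?_⟩
        rw [← hu']
      · have hur : u ≠ r := hner u (by omega)
        have hv' : v = treePar hG r u := parent_eq hG r hadj.symm (by omega)
        refine ⟨⟨G.dist r v % 2, by omega⟩, u, hur, by rw [← hv', Set.pair_comm], ?_⟩
        rw [← hv']
    · -- subset
      rintro i C ⟨v, hv, rfl, -⟩
      exact ⟨treePar hG r v, v, (hpar v hv).1, rfl⟩
    · -- disjoint
      intro i j hij
      rw [Set.disjoint_left]
      rintro C ⟨v, hv, rfl, hvp⟩ ⟨w, hw, hCw, hwp⟩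
      have hvw := hrep v w hv hw hCw
      rw [hvw] at hvp
      exact hij (Fin.ext (by omega))
    · -- nicely ordered
      intro i
      set rle : V → V → Prop := fun a b => pos a ≤ pos b with hrledef
      haveI : DecidableRel rle := fun a b => inferInstanceAs (Decidable (pos a ≤ pos b))
      haveI : IsTrans V rle := ⟨fun a b c h1 h2 => le_trans h1 h2⟩
      haveI : Std.Antisymm rle := ⟨fun a b h1 h2 => hposinj (le_antisymm h1 h2)⟩
      haveI : Std.Total rle := ⟨fun a b => le_total _ _⟩
      set D : Finset V := Finset.univ.filter
        (fun v => v ≠ r ∧ G.dist r (treePar hG r v) % 2 = i.val) with hDdef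
      have hmemD : ∀ v : V, v ∈ D ↔ v ≠ r ∧ G.dist r (treePar hG r v) % 2 = i.val := by
        intro v
        simp [hDdef]
      refine ⟨(Finset.sort D rle).map (fun v => ({treePar hG r v, v} : Set V)), ?_, ?_, ?_⟩
      · -- nodup
        refine List.Nodup.map_on ?_ (Finset.sort_nodup _ _)
        intro x hx y hy hxy
        have hx' := (hmemD x).mp ((Finset.mem_sort (r := rle)).mp hx)
        have hy' := (hmemD y).mp ((Finset.mem_sort (r := rle)).mp hy)
        exact hrep x y hx'.1 hy'.1 hxy
      · -- membership
        intro C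
        simp only [List.mem_map, Finset.mem_sort (r := rle), Set.mem_setOf_eq]
        constructor
        · rintro ⟨v, hv, rfl⟩
          have := (hmemD v).mp hv
          exact ⟨v, this.1, rfl, this.2⟩
        · rintro ⟨v, hv, rfl, hp⟩
          exact ⟨v, (hmemD v).mpr ⟨hv, hp⟩, rfl⟩
      · -- pairwise
        rw [List.pairwise_map, List.pairwise_iff_forall_sublist]
        intro a b hsub
        have ha := (Finset.mem_sort (r := rle)).mp (hsub.subset (by simp : a ∈ [a, b]))
        have hb := (Finset.mem_sort (r := rle)).mp (hsub.subset (by simp : b ∈ [a, b]))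
        have ha' := (hmemD a).mp ha
        have hb' := (hmemD b).mp hb
        have har := ha'.1
        have hbr := hb'.1
        have hlt : pos a < pos b := by
          have hs := Finset.pairwise_sort D rle
          have hnd := Finset.sort_nodup D rle
          have h1 : rle a b := List.pairwise_iff_forall_sublist.mp hs hsub
          have h2 : a ≠ b := List.pairwise_iff_forall_sublist.mp hnd hsub
          have h1' : pos a ≤ pos b := h1
          have h3 : pos a ≠ pos b := fun e => h2 (hposinj e)
          omega
        have da := (hpar a har).2
        have db := (hpar b hbr).2
        intro u hu w hw htr
        simp only [Set.mem_insert_iff, Set.mem_singleton_iff] at hu hw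
        have htr' : G.dist r u % 3 = G.dist r w % 3 := congrArg Fin.val htr
        rcases hposlt a b hlt with hlt' | ⟨hde, hke⟩
        · -- strictly deeper
          have hpar2 : G.dist r (treePar hG r a) % 2 = G.dist r (treePar hG r b) % 2 := by
            rw [ha'.2, hb'.2]
          rcases hu with rfl | rfl <;> rcases hw with rfl | rfl <;>
            exact le_of_lt (hposmono _ _ (Or.inl (by omega)))
        · -- same depth
          rcases hu with rfl | rfl <;> rcases hw with rfl | rfl
          · exact hkeypar a b har hbr hde hke
          · exfalso; omega
          · exfalso; omega
          · exact le_of_lt hlt
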